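/- (Order-independence of forest contractions.) Let H = (V, E, c, ω) be a weighted hypergraph and let F be a rooted forest on V, given by a parent function par : D → V on a subset D ⊆ V such that the directed graph with edges {(v, par(v)) | v ∈ D} is acyclic; the nodes of V \ D are the roots, and root(w) denotes the root of the tree of F containing w. Call an enumeration v_1, …, v_r of D children-first if every node of D appears after all of its children in F. Then for every children-first enumeration, performing the pairwise contractions of v_1 onto par(v_1), then v_2 onto par(v_2), …, then v_r onto par(v_r) (where contracting v onto w replaces v by w in every net of the current hypergraph and adds c(v) to the weight of w) yields the same weighted hypergraph, namely the contraction of H by the clustering whose clusters are the trees of F: its node set is V \ D, each net e ∈ E becomes the image root(e) := {root(w) | w ∈ e} with weight ω(e), and each node r has weight Σ_{w ∈ V with root(w) = r} c(w). -/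

import Mathlib

open Finset

variable {V ι : Type*} [DecidableEq V] [Fintype V] [DecidableEq ι]

/-- Contracting node `x` onto node `w` in the pin lists: `x` is replaced by `w` in every net
containing `x` (which removes `x` from nets already containing `w`). -/
def contractPins (p : ι → Finset V) (x w : V) : ι → Finset V :=
  fun e => if x ∈ p e then insert w ((p e).erase x) else p e

/-- Contracting node `x` onto node `w` in the node weights: `w` receives weight `c(w) + c(x)`. -/
def contractWeight (cw : V → ℝ) (x w : V) : V → ℝ :=
  Function.update cw w (cw w + cw x)

/-- Perform a sequence of pairwise contractions `(x, w)` (contract `x` onto `w`), in order, on a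
hypergraph state given by pin lists and node weights. -/
def runContractions (p0 : ι → Finset V) (c0 : V → ℝ) (seq : List (V × V)) :
    (ι → Finset V) × (V → ℝ) :=
  seq.foldl (fun st m => (contractPins st.1 m.1 m.2, contractWeight st.2 m.1 m.2)) (p0, c0)

set_option linter.unusedSectionVars false in
theorem stmt9_main : ∀ (n : ℕ) (pins : ι → Finset V) (c : V → ℝ) (D : Finset V),
    D.card = n → ∀ (par rt : V → V), (∀ w, w ∉ D → rt w = w) → (∀ w ∈ D, rt w = rt (par w)) →
    ∀ (en : Fin n → V), (∀ i, en i ∈ D) → Function.Injective en →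
    (∀ i j : Fin n, par (en i) = en j → i < j) →
    (∀ e, (runContractions pins c ((List.finRange n).map (fun i => (en i, par (en i))))).1 e =
        (pins e).image rt) ∧
    (∀ r : V, r ∉ D →
      (runContractions pins c ((List.finRange n).map (fun i => (en i, par (en i))))).2 r =
        ∑ w ∈ Finset.univ.filter (fun w => rt w = r), c w) := by
  intro n
  induction n with
  | zero =>
    intro pins c D hD par rt hrt₁ hrt₂ en hen heninj hcf
    have hDe : D = ∅ := Finset.card_eq_zero.mp hD
    subst hDe
    have hrtid : rt = id := funext fun w => hrt₁ w (by simp)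
    constructor
    · intro e
      simp [runContractions, hrtid]
    · intro r _
      have hf : Finset.univ.filter (fun w => rt w = r) = {r} := by
        rw [hrtid]; ext w; simp [eq_comm]
      simp [runContractions, hf]
  | succ n ih =>
    intro pins c D hD par rt hrt₁ hrt₂ en hen heninj hcf
    set x := en 0 with hx
    have hxD : x ∈ D := hen 0
    have hpx : par x ≠ x := by
      intro h
      exact absurd (hcf 0 0 h) (by simp)
    -- surjectivity of en onto D
    have hsurj : ∀ v ∈ D, ∃ i, en i = v := by
      have himg : Finset.univ.image en = D := by
        apply Finset.eq_of_subset_of_card_le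
        · intro v hv
          obtain ⟨i, _, hi⟩ := Finset.mem_image.mp hv
          exact hi ▸ hen i
        · rw [Finset.card_image_of_injective _ heninj, card_univ, Fintype.card_fin, hD]
      intro v hv
      obtain ⟨i, _, hi⟩ := Finset.mem_image.mp (himg ▸ hv)
      exact ⟨i, hi⟩
    have hnopar : ∀ v ∈ D, par v ≠ x := by
      intro v hv h
      obtain ⟨i, hi⟩ := hsurj v hv
      subst hi
      exact absurd (hcf i 0 h) (by simp)
    -- new data
    set D' := D.erase x with hD'
    have hD'card : D'.card = n := by
      rw [hD', Finset.card_erase_of_mem hxD, hD]; rfl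
    set rt' := Function.update rt x x with hrt'
    have hrt'x : rt' x = x := Function.update_self _ _ _
    have hrt'ne : ∀ v, v ≠ x → rt' v = rt v := fun v hv => Function.update_of_ne hv _ _
    set pins' := contractPins pins x (par x) with hpins'
    set c' := contractWeight c x (par x) with hc'
    set en' : Fin n → V := fun i => en i.succ with hen'
    have hen'D : ∀ i, en' i ∈ D' := by
      intro i
      refine Finset.mem_erase.mpr ⟨?_, hen _⟩
      intro h
      exact absurd (heninj h) (Fin.succ_ne_zero i)
    have hen'inj : Function.Injective en' := by
      intro i j h
      exact Fin.succ_injective _ (heninj h)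
    have hcf' : ∀ i j : Fin n, par (en' i) = en' j → i < j := by
      intro i j h
      have := hcf i.succ j.succ h
      exact Fin.succ_lt_succ_iff.mp this
    have hrt₁' : ∀ w, w ∉ D' → rt' w = w := by
      intro w hw
      by_cases h : w = x
      · subst h; exact hrt'x
      · rw [hrt'ne w h]
        exact hrt₁ w (fun hwD => hw (Finset.mem_erase.mpr ⟨h, hwD⟩))
    have hrt₂' : ∀ w ∈ D', rt' w = rt' (par w) := by
      intro w hw
      obtain ⟨hwx, hwD⟩ := Finset.mem_erase.mp hw
      rw [hrt'ne w hwx, hrt'ne (par w) (hnopar w hwD)]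
      exact hrt₂ w hwD
    obtain ⟨IH1, IH2⟩ := ih pins' c' D' hD'card par rt' hrt₁' hrt₂' en' hen'D hen'inj hcf'
    -- peel the head of the list
    have hlist : (List.finRange (n+1)).map (fun i => (en i, par (en i))) =
        (x, par x) :: (List.finRange n).map (fun i => (en' i, par (en' i))) := by
      rw [List.finRange_succ, List.map_cons, List.map_map]
      rfl
    have hrun : runContractions pins c ((List.finRange (n+1)).map (fun i => (en i, par (en i)))) =
        runContractions pins' c' ((List.finRange n).map (fun i => (en' i, par (en' i)))) := by
      rw [hlist]; rfl
    constructor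
    · intro e
      rw [hrun, IH1 e]
      by_cases hxe : x ∈ pins e
      · have hpe : pins' e = insert (par x) ((pins e).erase x) := by
          simp [hpins', contractPins, hxe]
        rw [hpe, Finset.image_insert, hrt'ne (par x) hpx]
        have h2 : ((pins e).erase x).image rt' = ((pins e).erase x).image rt := by
          apply Finset.image_congr
          intro v hv
          exact hrt'ne v (Finset.mem_erase.mp hv).1
        rw [h2]
        conv_rhs => rw [← Finset.insert_erase hxe]
        rw [Finset.image_insert, hrt₂ x hxD]
      · have hpe : pins' e = pins e := by simp [hpins', contractPins, hxe]
        rw [hpe]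
        apply Finset.image_congr
        intro v hv
        exact hrt'ne v (fun h => hxe (h ▸ hv))
    · intro r hr
      have hrx : r ≠ x := fun h => hr (h ▸ hxD)
      have hrD' : r ∉ D' := fun h => hr (Finset.mem_erase.mp h).2
      rw [hrun, IH2 r hrD']
      have hfil : Finset.univ.filter (fun w => rt' w = r) =
          (Finset.univ.filter (fun w => rt w = r)).erase x := by
        ext w
        simp only [Finset.mem_erase, Finset.mem_filter, Finset.mem_univ, true_and]
        by_cases h : w = x
        · subst h
          simp only [hrt'x]
          constructor
          · intro h'; exact absurd h'.symm hrx
          · rintro ⟨h1, -⟩; exact absurd rfl h1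
        · rw [hrt'ne w h]
          tauto
      rw [hfil]
      set S := Finset.univ.filter (fun w => rt w = r) with hS
      have hrtpx : rt (par x) = rt x := (hrt₂ x hxD).symm
      by_cases hxr : rt x = r
      · have hxS : x ∈ S := by simp [hS, hxr]
        have hpS : par x ∈ S.erase x := by
          refine Finset.mem_erase.mpr ⟨hpx, ?_⟩
          simp [hS, hrtpx, hxr]
        have h1 : ∑ w ∈ S.erase x, c' w = (c (par x) + c x) + ∑ w ∈ (S.erase x).erase (par x), c w := by
          rw [hc']
          simpa [contractWeight, Finset.erase_eq] using
            Finset.sum_update_of_mem hpS c (c (par x) + c x)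
        have h2 : ∑ w ∈ S.erase x, c w = c (par x) + ∑ w ∈ (S.erase x).erase (par x), c w :=
          (Finset.add_sum_erase _ c hpS).symm
        have h3 : ∑ w ∈ S, c w = c x + ∑ w ∈ S.erase x, c w :=
          (Finset.add_sum_erase _ c hxS).symm
        rw [h1, h3, h2]; ring
      · have hxS : x ∉ S := by simp [hS, hxr]
        rw [Finset.erase_eq_of_notMem hxS]
        apply Finset.sum_congr rfl
        intro w hw
        have hwp : w ≠ par x := by
          intro h
          subst h
          exact hxr (hrtpx ▸ (Finset.mem_filter.mp hw).2)
        exact Function.update_of_ne hwp _ _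

/-- order-independence of forest contractions. Let `F` be a rooted forest on
the node set given by a parent function `par` on `D ⊆ V`, let `rt` be the corresponding root
function (`rt w = w` for roots, `rt w = rt (par w)` for `w ∈ D`), and let `en : Fin |D| → D` be
any children-first enumeration of `D` (every node of `D` appears after all of its children, i.e.
`par (en i) = en j → i < j`; this also encodes acyclicity of the parent relation).
Then contracting `en 0` onto `par (en 0)`, then `en 1` onto `par (en 1)`, … yields the same
weighted hypergraph, namely the contraction of `H` by the clustering given by the trees of `F`:
every net `e ∈ E` becomes its image `rt '' e`, and every root `r ∉ D` gets weight
`Σ_{w : rt w = r} c(w)`. -/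
theorem stmt9 (E : Finset ι) (pins : ι → Finset V) (c : V → ℝ) (ω : ι → ℝ)
    (hne : ∀ e ∈ E, (pins e).Nonempty) (hω : ∀ e ∈ E, 0 < ω e) (hc : ∀ v, 0 < c v)
    (D : Finset V) (par : V → V)
    (rt : V → V) (hrt₁ : ∀ w, w ∉ D → rt w = w) (hrt₂ : ∀ w ∈ D, rt w = rt (par w))
    (en : Fin D.card → V) (hen : ∀ i, en i ∈ D) (heninj : Function.Injective en)
    (hcf : ∀ i j : Fin D.card, par (en i) = en j → i < j) :
    (∀ e ∈ E,
      (runContractions pins c ((List.finRange D.card).map (fun i => (en i, par (en i))))).1 e =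
        (pins e).image rt) ∧
    (∀ r : V, r ∉ D →
      (runContractions pins c ((List.finRange D.card).map (fun i => (en i, par (en i))))).2 r =
        ∑ w ∈ Finset.univ.filter (fun w => rt w = r), c w) := by
  obtain ⟨h1, h2⟩ := stmt9_main D.card pins c D rfl par rt hrt₁ hrt₂ en hen heninj hcf
  exact ⟨fun e _ => h1 e, h2⟩
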